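/- Let D be an integer with 3 ≤ D ≤ 5, set x_c = 1/(4(D−1)) and T(w) = (1 − √(1 − 4w))/(2w), and let x > x_c be real. For real N large enough that 0 < 1/(4D) − x·N^{2−D}, define Ḡ(x, N) = T(D·(1/(4D) − x·N^{2−D})) + 4·N^{1−D/2}·√D·(√x − √(x − x_c)). Then there exist constants C > 0 and N₀ such that for all N ≥ N₀, |Ḡ(x, N) − (2 − 4·N^{1−D/2}·√(D·(x − x_c)))| ≤ C·N^{1/2−D/2}. -/

import Mathlib

/-- Closed form of the plane-tree generating function. -/
noncomputable def Tgf (w : ℝ) : ℝ := (1 - Real.sqrt (1 - 4 * w)) / (2 * w)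

/-- The melonic-plus-cherry-tree approximation of the two-point function in the
double scaling regime. -/
noncomputable def Gbar (D : ℕ) (x N : ℝ) : ℝ :=
  Tgf ((D : ℝ) * (1 / (4 * (D : ℝ)) - x * N ^ ((2 : ℝ) - (D : ℝ)))) +
    4 * N ^ (1 - (D : ℝ) / 2) * Real.sqrt (D : ℝ) *
      (Real.sqrt x - Real.sqrt (x - 1 / (4 * ((D : ℝ) - 1))))

/-- The double scaling limit (Theorem 5 of the paper): for `3 ≤ D ≤ 5` and
`x > x_c = 1/(4(D-1))`, the double-scaled two-point function satisfies
`Ḡ(x,N) = 2 - 4·N^{1-D/2}·√(D(x - x_c)) + O(N^{1/2-D/2})`. -/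
theorem double_scaling_limit (D : ℕ) (hD1 : 3 ≤ D) (hD2 : D ≤ 5) (x : ℝ)
    (hx : 1 / (4 * ((D : ℝ) - 1)) < x) :
    ∃ C > (0 : ℝ), ∃ N₀ : ℝ, ∀ N : ℝ, N₀ ≤ N →
      0 < 1 / (4 * (D : ℝ)) - x * N ^ ((2 : ℝ) - (D : ℝ)) ∧
      |Gbar D x N -
          (2 - 4 * N ^ (1 - (D : ℝ) / 2) *
            Real.sqrt ((D : ℝ) * (x - 1 / (4 * ((D : ℝ) - 1)))))|
        ≤ C * N ^ ((1 : ℝ) / 2 - (D : ℝ) / 2) := by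
  have hD3 : (3 : ℝ) ≤ (D : ℝ) := by exact_mod_cast hD1
  have hDpos : (0 : ℝ) < (D : ℝ) := by linarith
  have hxc : (0 : ℝ) < 1 / (4 * ((D : ℝ) - 1)) := by
    have : (0 : ℝ) < 4 * ((D : ℝ) - 1) := by linarith
    positivity
  have hxpos : 0 < x := lt_trans hxc hx
  refine ⟨8 * D * x, by positivity, max 1 (4 * D * x + 1), fun N hN => ?_⟩
  have hN1 : (1 : ℝ) ≤ N := le_trans (le_max_left _ _) hN
  have hNpos : (0 : ℝ) < N := lt_of_lt_of_le one_pos hN1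
  have hN2 : 4 * D * x + 1 ≤ N := le_trans (le_max_right _ _) hN
  -- positivity of the argument
  have hexp : N ^ ((2 : ℝ) - D) ≤ N ^ (-1 : ℝ) :=
    Real.rpow_le_rpow_of_exponent_le hN1 (by linarith)
  have hNinv : N ^ (-1 : ℝ) = 1 / N := by
    rw [Real.rpow_neg_one]; exact (one_div N).symm
  have hpos : 0 < 1 / (4 * (D : ℝ)) - x * N ^ ((2 : ℝ) - D) := by
    have h1 : x * N ^ ((2 : ℝ) - D) ≤ x * (1 / N) := by
      rw [← hNinv]; exact mul_le_mul_of_nonneg_left hexp (le_of_lt hxpos)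
    have h2 : x * (1 / N) < 1 / (4 * (D : ℝ)) := by
      rw [mul_one_div, div_lt_div_iff₀ hNpos (by positivity)]
      nlinarith
    linarith
  refine ⟨hpos, ?_⟩
  -- set u
  set u : ℝ := Real.sqrt ((D : ℝ) * x) * N ^ (1 - (D : ℝ) / 2) with hu_def
  have hu0 : 0 ≤ u := by positivity
  have hNe : N ^ (1 - (D : ℝ) / 2) * N ^ (1 - (D : ℝ) / 2) = N ^ ((2 : ℝ) - D) := by
    rw [← Real.rpow_add hNpos]; congr 1; ring
  have hu2 : u * u = (D : ℝ) * x * N ^ ((2 : ℝ) - D) := by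
    rw [hu_def]
    rw [show Real.sqrt ((D:ℝ)*x) * N ^ (1 - (D:ℝ)/2) * (Real.sqrt ((D:ℝ)*x) * N ^ (1 - (D:ℝ)/2))
        = (Real.sqrt ((D:ℝ)*x) * Real.sqrt ((D:ℝ)*x)) * (N ^ (1 - (D:ℝ)/2) * N ^ (1 - (D:ℝ)/2)) by ring,
      Real.mul_self_sqrt (by positivity), hNe]
  have huq : u * u < 1 / 4 := by
    have := mul_lt_mul_of_pos_left (by linarith : x * N ^ ((2:ℝ)-D) < 1 / (4 * (D:ℝ))) hDpos
    rw [← mul_assoc] at this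
    rw [hu2]
    calc (D:ℝ) * x * N ^ ((2:ℝ)-D) < (D:ℝ) * (1 / (4 * (D:ℝ))) := by
          rw [mul_assoc]; exact mul_lt_mul_of_pos_left (by linarith) hDpos
      _ = 1 / 4 := by field_simp
  have hult : u < 1 / 2 := by nlinarith
  -- the argument of Tgf
  have hw : (D : ℝ) * (1 / (4 * (D : ℝ)) - x * N ^ ((2 : ℝ) - D)) = 1 / 4 - u * u := by
    rw [hu2]; field_simp
  have hwpos : (0 : ℝ) < 1 / 4 - u * u := by linarith
  -- compute Tgf
  have hsq : 1 - 4 * (1 / 4 - u * u) = (2 * u) ^ 2 := by ring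
  have hT : Tgf ((D : ℝ) * (1 / (4 * (D : ℝ)) - x * N ^ ((2 : ℝ) - D))) = 2 / (1 + 2 * u) := by
    rw [hw]
    unfold Tgf
    rw [hsq, Real.sqrt_sq (by positivity)]
    rw [div_eq_div_iff (by nlinarith) (by nlinarith)]
    ring
  -- split the sqrt of the product
  have hsplit : Real.sqrt ((D : ℝ) * (x - 1 / (4 * ((D : ℝ) - 1))))
      = Real.sqrt (D : ℝ) * Real.sqrt (x - 1 / (4 * ((D : ℝ) - 1))) :=
    Real.sqrt_mul (le_of_lt hDpos) _
  have hDx : Real.sqrt ((D : ℝ) * x) = Real.sqrt (D : ℝ) * Real.sqrt x :=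
    Real.sqrt_mul (le_of_lt hDpos) _
  -- the key simplification
  have hkey : Gbar D x N -
      (2 - 4 * N ^ (1 - (D : ℝ) / 2) *
        Real.sqrt ((D : ℝ) * (x - 1 / (4 * ((D : ℝ) - 1)))))
      = 8 * (u * u) / (1 + 2 * u) := by
    unfold Gbar
    rw [hT, hsplit]
    have h4u : (4 : ℝ) * u = 4 * N ^ (1 - (D : ℝ) / 2) * Real.sqrt (D : ℝ) * Real.sqrt x := by
      rw [hu_def, hDx]; ring
    have hne : (1 + 2 * u) ≠ 0 := by positivity
    have e1 : 2 / (1 + 2 * u) +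
        4 * N ^ (1 - (D : ℝ) / 2) * Real.sqrt (D : ℝ) *
          (Real.sqrt x - Real.sqrt (x - 1 / (4 * ((D : ℝ) - 1)))) -
        (2 - 4 * N ^ (1 - (D : ℝ) / 2) *
          (Real.sqrt (D : ℝ) * Real.sqrt (x - 1 / (4 * ((D : ℝ) - 1)))))
        = 2 / (1 + 2 * u) + 4 * u - 2 := by
      rw [h4u]; ring
    rw [e1]
    field_simp
    ring
  rw [hkey]
  have habs : |8 * (u * u) / (1 + 2 * u)| = 8 * (u * u) / (1 + 2 * u) := by
    apply abs_of_nonneg; positivity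
  rw [habs]
  have hb1 : 8 * (u * u) / (1 + 2 * u) ≤ 8 * (u * u) := by
    apply div_le_self (by positivity) (by linarith)
  have hb2 : 8 * (u * u) = 8 * (D : ℝ) * x * N ^ ((2 : ℝ) - D) := by rw [hu2]; ring
  have hb3 : N ^ ((2 : ℝ) - D) ≤ N ^ ((1 : ℝ) / 2 - (D : ℝ) / 2) :=
    Real.rpow_le_rpow_of_exponent_le hN1 (by linarith)
  calc 8 * (u * u) / (1 + 2 * u) ≤ 8 * (u * u) := hb1
    _ = 8 * (D : ℝ) * x * N ^ ((2 : ℝ) - D) := hb2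
    _ ≤ 8 * (D : ℝ) * x * N ^ ((1 : ℝ) / 2 - (D : ℝ) / 2) := by
        exact mul_le_mul_of_nonneg_left hb3 (by positivity)
    _ = 8 * ↑D * x * N ^ ((1 : ℝ) / 2 - (D : ℝ) / 2) := by ring
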